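/- In a finite interval order, any strict alternating cycle of length at least 2 contains at most one strict comparability among the relations x_i ≤ y_{i+1}; that is, if x_i < y_{i+1} and x_j < y_{j+1} strictly for i ≠ j, then the poset contains a 2+2, contradicting being an interval order. -/
import Mathlib


/-- Two elements are incomparable in a poset. -/
def Incomp {α : Type*} [PartialOrder α] (x y : α) : Prop := ¬ x ≤ y ∧ ¬ y ≤ x

/-- The poset contains a subposet isomorphic to 2+2 (two disjoint 2-chains). -/
def HasTwoPlusTwo (α : Type*) [PartialOrder α] : Prop :=
  ∃ a₁ b₁ a₂ b₂ : α, a₁ < b₁ ∧ a₂ < b₂ ∧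
    Incomp a₁ a₂ ∧ Incomp a₁ b₂ ∧ Incomp b₁ a₂ ∧ Incomp b₁ b₂

/-- A strict alternating cycle of length `k + 1`: `x i ≤ y (i+1)` cyclically, and
`x i` is incomparable to `y j` whenever `j ≠ i + 1` (cyclically). -/
def IsStrictAltCycle {α : Type*} [PartialOrder α] {k : ℕ} (x y : Fin (k + 1) → α) : Prop :=
  (∀ i : Fin (k + 1), x i ≤ y (i + 1)) ∧
    ∀ i j : Fin (k + 1), j ≠ i + 1 → Incomp (x i) (y j)

/-- In an interval order (no 2+2), a strict alternating cycle of length at least 2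
contains at most one strict comparability among the relations `x i ≤ y (i+1)`. -/
theorem stmt_3 {α : Type*} [Fintype α] [PartialOrder α] (h : ¬ HasTwoPlusTwo α)
    {k : ℕ} (hk : 1 ≤ k) (x y : Fin (k + 1) → α) (hc : IsStrictAltCycle x y) :
    ∀ i j : Fin (k + 1), x i < y (i + 1) → x j < y (j + 1) → i = j := by
  intro i j hi hj
  by_contra hij
  obtain ⟨hle, hinc⟩ := hc
  have hne : (j : Fin (k+1)) + 1 ≠ i + 1 := fun hh => hij (add_right_cancel hh).symm
  have hne' : (i : Fin (k+1)) + 1 ≠ j + 1 := fun hh => hij (add_right_cancel hh)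
  have h1 := hinc i (j + 1) hne
  have h2 := hinc j (i + 1) hne'
  exact h ⟨x i, y (i + 1), x j, y (j + 1), hi, hj,
    ⟨fun hh => h1.1 (hh.trans (hle j)), fun hh => h2.1 (hh.trans (hle i))⟩,
    h1,
    ⟨fun hh => h2.2 hh, fun hh => h2.1 hh⟩,
    ⟨fun hh => h1.1 ((hle i).trans hh), fun hh => h2.1 ((hle j).trans hh)⟩⟩
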